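/- Any two orthogonal bipartite pure states |ψ⟩, |φ⟩ ∈ ℂ^{d_A} ⊗ ℂ^{d_B} can be written, after a suitable choice of orthonormal basis {|i⟩}_{i=1}^{d_A} for Alice's space, as |ψ⟩ = Σ_i |i⟩|η_i⟩ and |φ⟩ = Σ_i |i⟩|η_i^⊥⟩ where for each i the (unnormalized) vectors satisfy ⟨η_i|η_i^⊥⟩ = 0. -/

import Mathlib

open Matrix Complex
open scoped ComplexOrder

noncomputable section

/-- Outer product `|v⟩⟨v|`. -/
def outer {n : Type*} [Fintype n] (v : n → ℂ) : Matrix n n ℂ := vecMulVec v (star v)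

/-- Expectation value `⟨v|M|v⟩`. -/
def expVal {n : Type*} [Fintype n] (M : Matrix n n ℂ) (v : n → ℂ) : ℂ := star v ⬝ᵥ (M *ᵥ v)

/-- Inner product `⟨v|w⟩`. -/
def ip {n : Type*} [Fintype n] (v w : n → ℂ) : ℂ := ∑ i, star (v i) * w i

lemma lemA (α β b c : ℂ) (t : ℝ) (ht0 : 0 ≤ t) (ht1 : t ≤ 1) :
    ∃ w0 w1 : ℂ, star w0 * w0 + star w1 * w1 = 1 ∧
      star w0 * w0 * α + star w0 * w1 * b + star w1 * w0 * c + star w1 * w1 * β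
        = t * α + (1 - t) * β := by
  by_cases hδ : α - β = 0
  · refine ⟨1, 0, by norm_num, ?_⟩
    have hβ : β = α := by linear_combination -hδ
    rw [hβ]
    simp only [star_one, star_zero, one_mul, mul_one, mul_zero, zero_mul, add_zero]
    ring
  · set δ := α - β with hδdef
    set h : ℝ → ℝ := fun φ =>
      ((b * Complex.exp (φ * Complex.I) + c * Complex.exp (-(φ * Complex.I))) *
        (starRingEnd ℂ) δ).im with hh
    have hcont : Continuous h := by
      apply Complex.continuous_im.comp
      fun_prop
    have e1 : Complex.exp ((Real.pi : ℂ) * Complex.I) = -1 := Complex.exp_pi_mul_I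
    have e2 : Complex.exp (-((Real.pi : ℂ) * Complex.I)) = -1 := by
      rw [Complex.exp_neg, e1]; norm_num
    have hpi : h Real.pi = - h 0 := by
      simp only [hh, Complex.ofReal_zero, zero_mul, neg_zero, Complex.exp_zero, mul_one, e1, e2]
      rw [show b * (-1) + c * (-1) = -(b + c) by ring, neg_mul, Complex.neg_im]
    have : ∃ φ0, h φ0 = 0 := by
      rcases le_total (h 0) 0 with h0 | h0
      · obtain ⟨φ0, _, hφ0⟩ := intermediate_value_Icc (le_of_lt Real.pi_pos)
          hcont.continuousOn (⟨h0, by linarith [hpi]⟩ : (0:ℝ) ∈ Set.Icc (h 0) (h Real.pi))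
        exact ⟨φ0, hφ0⟩
      · obtain ⟨φ0, _, hφ0⟩ := intermediate_value_Icc' (le_of_lt Real.pi_pos)
          hcont.continuousOn (⟨by linarith [hpi], h0⟩ : (0:ℝ) ∈ Set.Icc (h Real.pi) (h 0))
        exact ⟨φ0, hφ0⟩
    obtain ⟨φ0, hφ0⟩ := this
    set E := Complex.exp (φ0 * Complex.I) with hE
    have hEstar : star E = Complex.exp (-(φ0 * Complex.I)) := by
      rw [hE, Complex.star_def, ← Complex.exp_conj]
      congr 1
      simp [Complex.ext_iff]
    have hE1 : star E * E = 1 := by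
      rw [hEstar, hE, ← Complex.exp_add]
      simp
    set g0 : ℂ := b * E + c * star E with hg0
    have hδns : Complex.normSq δ ≠ 0 := by simpa using hδ
    set s : ℝ := (g0 * (starRingEnd ℂ) δ).re / Complex.normSq δ with hs
    have hgδre : g0 * (starRingEnd ℂ) δ = ((g0 * (starRingEnd ℂ) δ).re : ℂ) := by
      apply Complex.ext
      · simp
      · simp only [Complex.ofReal_im]
        rw [hg0, hEstar]
        exact hφ0
    have hgs : g0 = (s : ℂ) * δ := by
      have hns : ((Complex.normSq δ : ℝ) : ℂ) ≠ 0 := by exact_mod_cast hδns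
      have hcd : (starRingEnd ℂ) δ * δ = ((Complex.normSq δ : ℝ) : ℂ) := by
        rw [mul_comm, Complex.mul_conj]
      have key : g0 * ((Complex.normSq δ : ℝ) : ℂ)
          = ((g0 * (starRingEnd ℂ) δ).re : ℂ) * δ := by
        linear_combination δ * hgδre - g0 * hcd
      rw [hs, Complex.ofReal_div, div_mul_eq_mul_div, eq_div_iff hns]
      simpa using key
    set f : ℝ → ℝ := fun θ => Real.cos θ ^ 2 - t + s * Real.cos θ * Real.sin θ with hf
    have hfc : Continuous f := by fun_prop
    have hf0 : f 0 = 1 - t := by simp [hf]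
    have hfpi2 : f (Real.pi / 2) = -t := by simp [hf]
    obtain ⟨θ0, hθ0⟩ : ∃ θ0, f θ0 = 0 := by
      obtain ⟨θ0, _, hθ0⟩ := intermediate_value_Icc' (by positivity : (0:ℝ) ≤ Real.pi / 2)
        hfc.continuousOn
        (by rw [hf0, hfpi2]; exact ⟨by linarith, by linarith⟩ :
          (0:ℝ) ∈ Set.Icc (f (Real.pi/2)) (f 0))
      exact ⟨θ0, hθ0⟩
    set C : ℂ := (Real.cos θ0 : ℂ) with hC
    set S : ℂ := (Real.sin θ0 : ℂ) with hS
    have hCstar : star C = C := by rw [hC, Complex.star_def, Complex.conj_ofReal]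
    have hSstar : star S = S := by rw [hS, Complex.star_def, Complex.conj_ofReal]
    have hpy : S ^ 2 + C ^ 2 = 1 := by
      have := Real.sin_sq_add_cos_sq θ0
      rw [hS, hC]
      exact_mod_cast congrArg (Complex.ofReal) this
    have hf' : C ^ 2 - (t : ℂ) + (s : ℂ) * C * S = 0 := by
      have := congrArg (Complex.ofReal) hθ0
      push_cast at this
      rw [hC, hS]
      exact_mod_cast this
    have h2 : star (E * S) = star E * S := by rw [star_mul', hSstar]
    refine ⟨C, E * S, ?_, ?_⟩
    · rw [hCstar, h2]
      linear_combination (S * S) * hE1 + hpy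
    · rw [hCstar, h2]
      linear_combination (C * S) * hgs + (S * S * β) * hE1 + β * hpy + (α - β) * hf'

def bform {N : ℕ} (M : Matrix (Fin N) (Fin N) ℂ) (v w : Fin N → ℂ) : ℂ :=
  ∑ a, ∑ a', star (v a) * M a a' * w a'

lemma ip_sum_right {N m : ℕ} (v : Fin N → ℂ) (d : Fin m → ℂ) (y : Fin m → Fin N → ℂ) :
    ip v (fun a => ∑ k, d k * y k a) = ∑ k, d k * ip v (y k) := by
  simp only [ip, Finset.mul_sum]
  rw [Finset.sum_comm]
  apply Finset.sum_congr rfl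
  intro k _
  apply Finset.sum_congr rfl
  intro a _
  ring

lemma ip_sum_left {N m : ℕ} (c : Fin m → ℂ) (x : Fin m → Fin N → ℂ) (w : Fin N → ℂ) :
    ip (fun a => ∑ k, c k * x k a) w = ∑ k, star (c k) * ip (x k) w := by
  simp only [ip, Finset.mul_sum, star_sum, star_mul', Finset.sum_mul]
  rw [Finset.sum_comm]
  apply Finset.sum_congr rfl
  intro k _
  apply Finset.sum_congr rfl
  intro a _
  ring

lemma bform_eq_ip {N : ℕ} (M : Matrix (Fin N) (Fin N) ℂ) (v w : Fin N → ℂ) :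
    bform M v w = ip v (fun a => ∑ a', M a a' * w a') := by
  simp only [bform, ip, Finset.mul_sum]
  apply Finset.sum_congr rfl
  intro a _
  apply Finset.sum_congr rfl
  intro a' _
  ring

lemma mulvec_sum {N m : ℕ} (M : Matrix (Fin N) (Fin N) ℂ) (d : Fin m → ℂ)
    (y : Fin m → Fin N → ℂ) :
    (fun a => ∑ a', M a a' * (∑ k, d k * y k a'))
      = fun a => ∑ k, d k * (∑ a', M a a' * y k a') := by
  funext a
  simp only [Finset.mul_sum]
  rw [Finset.sum_comm]
  apply Finset.sum_congr rfl
  intro k _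
  apply Finset.sum_congr rfl
  intro a' _
  ring

lemma bform_sum_right {N m : ℕ} (M : Matrix (Fin N) (Fin N) ℂ) (v : Fin N → ℂ)
    (d : Fin m → ℂ) (y : Fin m → Fin N → ℂ) :
    bform M v (fun a => ∑ k, d k * y k a) = ∑ k, d k * bform M v (y k) := by
  rw [bform_eq_ip, mulvec_sum, ip_sum_right]
  apply Finset.sum_congr rfl
  intro k _
  rw [bform_eq_ip]

lemma bform_sum_left {N m : ℕ} (M : Matrix (Fin N) (Fin N) ℂ)
    (c : Fin m → ℂ) (x : Fin m → Fin N → ℂ) (w : Fin N → ℂ) :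
    bform M (fun a => ∑ k, c k * x k a) w = ∑ k, star (c k) * bform M (x k) w := by
  rw [bform_eq_ip, ip_sum_left]
  apply Finset.sum_congr rfl
  intro k _
  rw [bform_eq_ip]

lemma ip_comb {N : ℕ} (w0 w1 : ℂ) (x y : Fin N → ℂ) (v : Fin N → ℂ) :
    ip v (fun a => w0 * x a + w1 * y a) = w0 * ip v x + w1 * ip v y := by
  simp only [ip, Finset.mul_sum, ← Finset.sum_add_distrib]
  apply Finset.sum_congr rfl
  intro a _
  ring

lemma ip_comb_left {N : ℕ} (w0 w1 : ℂ) (x y : Fin N → ℂ) (v : Fin N → ℂ) :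
    ip (fun a => w0 * x a + w1 * y a) v = star w0 * ip x v + star w1 * ip y v := by
  simp only [ip, Finset.mul_sum, ← Finset.sum_add_distrib]
  apply Finset.sum_congr rfl
  intro a _
  simp only [star_add, star_mul']
  ring

lemma mulvec_comb {N : ℕ} (M : Matrix (Fin N) (Fin N) ℂ) (w0 w1 : ℂ) (x y : Fin N → ℂ) :
    (fun a => ∑ a', M a a' * (w0 * x a' + w1 * y a'))
      = fun a => w0 * (∑ a', M a a' * x a') + w1 * (∑ a', M a a' * y a') := by
  funext a
  simp only [Finset.mul_sum, ← Finset.sum_add_distrib]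
  apply Finset.sum_congr rfl
  intro a' _
  ring

lemma bform_comb {N : ℕ} (M : Matrix (Fin N) (Fin N) ℂ) (w0 w1 : ℂ) (x y : Fin N → ℂ) :
    bform M (fun a => w0 * x a + w1 * y a) (fun a => w0 * x a + w1 * y a)
      = star w0 * w0 * bform M x x + star w0 * w1 * bform M x y
        + star w1 * w0 * bform M y x + star w1 * w1 * bform M y y := by
  rw [bform_eq_ip, mulvec_comb, ip_comb_left, ip_comb, ip_comb,
    ← bform_eq_ip, ← bform_eq_ip, ← bform_eq_ip, ← bform_eq_ip]
  ring

lemma sum_bform_diag {n : ℕ} (M : Matrix (Fin n) (Fin n) ℂ) (f : Fin n → Fin n → ℂ)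
    (hf : ∀ i j, ip (f i) (f j) = if i = j then 1 else 0) :
    ∑ i, bform M (f i) (f i) = Matrix.trace M := by
  set F : Matrix (Fin n) (Fin n) ℂ := Matrix.of (fun i a => f i a) with hF
  have hFF : F * Fᴴ = 1 := by
    ext i j
    have h1 := hf j i
    simp only [ip] at h1
    simp only [Matrix.mul_apply, Matrix.conjTranspose_apply, Matrix.one_apply, hF,
      Matrix.of_apply]
    rw [show (∑ x, f i x * star (f j x)) = ∑ x, star (f j x) * f i x from
      Finset.sum_congr rfl (fun x _ => mul_comm _ _), h1]
    rcases eq_or_ne i j with h | h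
    · simp [h]
    · simp [h, h.symm]
  have hFF' : Fᴴ * F = 1 := mul_eq_one_comm.mp hFF
  calc ∑ i, bform M (f i) (f i)
      = ∑ a, ∑ a', M a a' * (Fᴴ * F) a a' := by
        simp only [bform, Matrix.mul_apply, Matrix.conjTranspose_apply, hF, Matrix.of_apply,
          Finset.mul_sum]
        rw [Finset.sum_comm]
        apply Finset.sum_congr rfl
        intro a _
        rw [Finset.sum_comm]
        apply Finset.sum_congr rfl
        intro a' _
        apply Finset.sum_congr rfl
        intro i _
        ring
    _ = Matrix.trace M := by
        rw [hFF']
        simp [Matrix.one_apply, mul_ite, mul_one, mul_zero, Finset.sum_ite_eq,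
          Matrix.trace, Matrix.diag]

lemma lemB {N : ℕ} (M : Matrix (Fin N) (Fin N) ℂ) :
    ∀ (n : ℕ) (v : Fin (n+1) → Fin N → ℂ) (c : Fin (n+1) → ℝ),
      (∀ i j, ip (v i) (v j) = if i = j then 1 else 0) →
      (∀ i, 0 ≤ c i) → (∑ i, c i) = 1 →
      (∑ i, (c i : ℂ) * bform M (v i) (v i)) = 0 →
      ∃ u : Fin N → ℂ, ip u u = 1 ∧ bform M u u = 0 := by
  intro n
  induction n with
  | zero =>
    intro v c hv hc hsum hq
    rw [Fin.sum_univ_succ, Fin.sum_univ_zero, add_zero] at hsum hq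
    refine ⟨v 0, by simpa using hv 0 0, ?_⟩
    rw [hsum] at hq
    simpa using hq
  | succ n ih =>
    intro v c hv hc hsum hq
    rw [Fin.sum_univ_succ, Fin.sum_univ_succ] at hsum hq
    simp only [Fin.succ_zero_eq_one] at hsum hq
    by_cases h01 : c 0 + c 1 = 0
    · have hc0 : c 0 = 0 := by linarith [hc 0, hc 1]
      have hc1 : c 1 = 0 := by linarith [hc 0, hc 1]
      apply ih (fun j => v j.succ) (fun j => c j.succ)
      · intro i j
        rw [hv]
        simp [Fin.succ_inj]
      · intro i; exact hc _
      · rw [Fin.sum_univ_succ]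
        simp only [Fin.succ_zero_eq_one]
        linarith
      · rw [Fin.sum_univ_succ]
        simp only [Fin.succ_zero_eq_one]
        rw [hc0, hc1] at hq
        rw [hc1]
        push_cast at hq ⊢
        linear_combination hq
    · have hpos : 0 < c 0 + c 1 :=
        lt_of_le_of_ne (add_nonneg (hc 0) (hc 1)) (Ne.symm h01)
      set t : ℝ := c 0 / (c 0 + c 1) with ht
      have ht0 : 0 ≤ t := div_nonneg (hc 0) hpos.le
      have ht1 : t ≤ 1 := (div_le_one hpos).mpr (by linarith [hc 1])
      obtain ⟨w0, w1, hw, hwq⟩ := lemA (bform M (v 0) (v 0)) (bform M (v 1) (v 1))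
        (bform M (v 0) (v 1)) (bform M (v 1) (v 0)) t ht0 ht1
      simp only [Complex.star_def] at hw hwq
      set u0 : Fin N → ℂ := fun a => w0 * v 0 a + w1 * v 1 a with hu0
      have hu0ip : ip u0 u0 = 1 := by
        rw [hu0, ip_comb_left, ip_comb, ip_comb, hv 0 0, hv 0 1, hv 1 0, hv 1 1]
        simp only [Complex.star_def, Fin.ext_iff, Fin.val_zero, Fin.val_one, if_pos rfl]
        norm_num
        linear_combination hw
      have hu0q : bform M u0 u0
          = (t : ℂ) * bform M (v 0) (v 0) + (1 - (t : ℂ)) * bform M (v 1) (v 1) := by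
        rw [hu0, bform_comb]
        simp only [Complex.star_def]
        exact_mod_cast hwq
      apply ih (fun j => Fin.cases u0 (fun k => v k.succ.succ) j)
        (fun j => Fin.cases (c 0 + c 1) (fun k => c k.succ.succ) j)
      · intro i j
        induction i using Fin.cases with
        | zero =>
          induction j using Fin.cases with
          | zero => simpa using hu0ip
          | succ k =>
            simp only [Fin.cases_zero, Fin.cases_succ]
            rw [hu0, ip_comb_left, hv, hv]
            simp [Fin.ext_iff]
        | succ k =>
          induction j using Fin.cases with
          | zero =>
            simp only [Fin.cases_zero, Fin.cases_succ]
            rw [hu0, ip_comb, hv, hv]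
            simp [Fin.ext_iff]
          | succ l =>
            simp only [Fin.cases_succ]
            rw [hv]
            simp [Fin.ext_iff]
      · intro i
        induction i using Fin.cases with
        | zero => simpa using hpos.le
        | succ k => simpa using hc k.succ.succ
      · rw [Fin.sum_univ_succ]
        simp only [Fin.cases_zero, Fin.cases_succ]
        linarith
      · rw [Fin.sum_univ_succ]
        simp only [Fin.cases_zero, Fin.cases_succ]
        rw [hu0q]
        have htsR : (c 0 + c 1) * t = c 0 := by
          rw [ht]; field_simp
        have htsR' : (c 0 + c 1) * (1 - t) = c 1 := by
          rw [ht]; field_simp; ring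
        have hts : ((c 0 : ℝ) : ℂ) * (t : ℂ) + ((c 1 : ℝ) : ℂ) * (t : ℂ) = ((c 0 : ℝ) : ℂ) := by
          exact_mod_cast congrArg (Complex.ofReal) (by linarith [htsR] : c 0 * t + c 1 * t = c 0)
        have hts' : ((c 0 : ℝ) : ℂ) * (1 - (t:ℂ)) + ((c 1 : ℝ) : ℂ) * (1 - (t:ℂ))
            = ((c 1 : ℝ) : ℂ) := by
          have : c 0 * (1 - t) + c 1 * (1 - t) = c 1 := by linarith [htsR']
          have := congrArg (Complex.ofReal) this
          push_cast at this ⊢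
          linear_combination this
        push_cast at hts hts' hq ⊢
        linear_combination hq + (bform M (v 0) (v 0)) * hts + (bform M (v 1) (v 1)) * hts'

lemma extend_onb {n : ℕ} (u : Fin (n+1) → ℂ) (hu : ip u u = 1) :
    ∃ f : Fin (n+1) → Fin (n+1) → ℂ,
      (∀ i j, ip (f i) (f j) = if i = j then 1 else 0) ∧ f 0 = u := by
  have hinner : ∀ x y : EuclideanSpace ℂ (Fin (n+1)), (inner ℂ x y : ℂ) = ip x y := by
    intro x y
    simp [ip, PiLp.inner_apply, RCLike.inner_apply, mul_comm]
  let u' : EuclideanSpace ℂ (Fin (n+1)) := WithLp.toLp 2 u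
  have horm : Orthonormal ℂ
      (({0} : Set (Fin (n+1))).restrict (fun _ : Fin (n+1) => u')) := by
    rw [orthonormal_iff_ite]
    intro i j
    have hij : i = j := Subsingleton.elim i j
    rw [hij, if_pos rfl]
    rw [hinner]
    exact hu
  obtain ⟨b, hb⟩ := horm.exists_orthonormalBasis_extension_of_card_eq (by simp)
  refine ⟨fun i a => b i a, ?_, ?_⟩
  · intro i j
    have := orthonormal_iff_ite.mp b.orthonormal i j
    rw [hinner] at this
    exact this
  · exact funext fun a => congrFun (congrArg WithLp.ofLp (hb 0 rfl)) a

lemma lemC : ∀ (n : ℕ) (M : Matrix (Fin n) (Fin n) ℂ), Matrix.trace M = 0 →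
    ∃ v : Fin n → Fin n → ℂ, (∀ i j, ip (v i) (v j) = if i = j then 1 else 0) ∧
      ∀ i, bform M (v i) (v i) = 0 := by
  intro n
  induction n with
  | zero =>
    intro M _
    exact ⟨fun _ _ => 0, fun i => i.elim0, fun i => i.elim0⟩
  | succ m ih =>
    intro M hM
    set std : Fin (m+1) → Fin (m+1) → ℂ := fun i a => if i = a then 1 else 0 with hstd
    have hstd_ip : ∀ i j, ip (std i) (std j) = if i = j then 1 else 0 := by
      intro i j
      simp only [ip, hstd, apply_ite (star : ℂ → ℂ), star_one, star_zero, ite_mul, one_mul,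
        zero_mul]
      rw [Finset.sum_ite_eq, if_pos (Finset.mem_univ i)]
      rcases eq_or_ne i j with h | h
      · simp [h]
      · simp [h, h.symm]
    have hstd_q : ∀ i, bform M (std i) (std i) = M i i := by
      intro i
      simp only [bform, hstd, apply_ite (star : ℂ → ℂ), star_one, star_zero, ite_mul, one_mul,
        zero_mul, mul_ite, mul_one, mul_zero]
      simp [Finset.sum_ite_eq]
    have hmpos : (0 : ℝ) < (m + 1 : ℝ) := by positivity
    obtain ⟨u, hu1, hu0⟩ := lemB M m std (fun _ => 1 / (m + 1 : ℝ)) hstd_ip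
      (fun _ => by positivity)
      (by
        rw [Finset.sum_const, Finset.card_univ, Fintype.card_fin, nsmul_eq_mul]
        push_cast
        field_simp)
      (by
        have h2 : ∑ i, ((1 / (m + 1 : ℝ) : ℝ) : ℂ) * bform M (std i) (std i)
            = ((1 / (m + 1 : ℝ) : ℝ) : ℂ) * Matrix.trace M := by
          simp only [Matrix.trace, Matrix.diag, Finset.mul_sum]
          exact Finset.sum_congr rfl (fun i _ => by rw [hstd_q i])
        rw [h2, hM, mul_zero])
    obtain ⟨f, hf_ip, hf0⟩ := extend_onb u hu1
    have htr : ∑ i, bform M (f i) (f i) = 0 := by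
      rw [sum_bform_diag M f hf_ip, hM]
    set Nm : Matrix (Fin m) (Fin m) ℂ :=
      Matrix.of (fun j k => bform M (f j.succ) (f k.succ)) with hNm
    have hNtr : Matrix.trace Nm = 0 := by
      rw [Fin.sum_univ_succ, hf0] at htr
      have : Matrix.trace Nm = ∑ j : Fin m, bform M (f j.succ) (f j.succ) := by
        simp [Matrix.trace, Matrix.diag, hNm]
      rw [this]
      rw [hu0, zero_add] at htr
      exact htr
    obtain ⟨g, hg_ip, hgq⟩ := ih Nm hNtr
    refine ⟨fun i => Fin.cases (f 0) (fun j a => ∑ k, g j k * f k.succ a) i, ?_, ?_⟩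
    · intro i j
      induction i using Fin.cases with
      | zero =>
        induction j using Fin.cases with
        | zero => simpa using hf_ip 0 0
        | succ l =>
          simp only [Fin.cases_zero, Fin.cases_succ]
          rw [ip_sum_right]
          rw [if_neg (Fin.succ_ne_zero l).symm]
          have : ∀ k : Fin m, g l k * ip (f 0) (f k.succ) = 0 := by
            intro k
            rw [hf_ip, if_neg (Fin.succ_ne_zero k).symm, mul_zero]
          rw [Finset.sum_congr rfl (fun k _ => this k), Finset.sum_const, smul_zero]
      | succ l =>
        induction j using Fin.cases with
        | zero =>
          simp only [Fin.cases_zero, Fin.cases_succ]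
          rw [ip_sum_left]
          rw [if_neg (Fin.succ_ne_zero l)]
          have : ∀ k : Fin m, star (g l k) * ip (f k.succ) (f 0) = 0 := by
            intro k
            rw [hf_ip, if_neg (Fin.succ_ne_zero k), mul_zero]
          rw [Finset.sum_congr rfl (fun k _ => this k), Finset.sum_const, smul_zero]
        | succ r =>
          simp only [Fin.cases_succ]
          rw [ip_sum_left]
          have : ∀ k : Fin m, star (g l k) * ip (f k.succ) (fun a => ∑ k', g r k' * f k'.succ a)
              = star (g l k) * g r k := by
            intro k
            rw [ip_sum_right]
            congr 1
            have : ∀ k' : Fin m, g r k' * ip (f k.succ) (f k'.succ)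
                = g r k' * (if k = k' then 1 else 0) := by
              intro k'
              rw [hf_ip]
              simp [Fin.succ_inj]
            rw [Finset.sum_congr rfl (fun k' _ => this k')]
            simp [Finset.sum_ite_eq]
          rw [Finset.sum_congr rfl (fun k _ => this k)]
          have h3 := hg_ip l r
          simp only [ip] at h3
          rw [h3]
          simp [Fin.succ_inj]
    · intro i
      induction i using Fin.cases with
      | zero =>
        simp only [Fin.cases_zero]
        rw [hf0, hu0]
      | succ l =>
        simp only [Fin.cases_succ]
        rw [bform_sum_left]
        have : ∀ k : Fin m, star (g l k) * bform M (f k.succ) (fun a => ∑ k', g l k' * f k'.succ a)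
            = star (g l k) * (∑ k', g l k' * Nm k k') := by
          intro k
          rw [bform_sum_right]
          rfl
        rw [Finset.sum_congr rfl (fun k _ => this k)]
        have hb : bform Nm (g l) (g l) = 0 := hgq l
        simp only [bform] at hb
        rw [← hb]
        apply Finset.sum_congr rfl
        intro k _
        rw [Finset.mul_sum]
        apply Finset.sum_congr rfl
        intro k' _
        ring

/-- **Walgate–Hardy lemma.** For any two orthogonal bipartite pure states `ψ, φ` there is an
orthonormal basis `e` of Alice's space in which the conditional (unnormalized) Bob states
`η_i = (⟨i|⊗I)ψ` and `η_i^⊥ = (⟨i|⊗I)φ` are orthogonal for every `i`. -/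
theorem walgate_hardy (dA dB : ℕ) (ψ φ : Fin dA → Fin dB → ℂ)
    (hψ : ∑ a, ∑ b, Complex.normSq (ψ a b) = 1)
    (hφ : ∑ a, ∑ b, Complex.normSq (φ a b) = 1)
    (horth : ∑ a, ∑ b, star (ψ a b) * φ a b = 0) :
    ∃ e : Fin dA → (Fin dA → ℂ),
      (∀ i j, ip (e i) (e j) = if i = j then 1 else 0) ∧
      (∀ i, ip (fun b => ∑ a, star (e i a) * ψ a b) (fun b => ∑ a, star (e i a) * φ a b) = 0) := by
  set M : Matrix (Fin dA) (Fin dA) ℂ :=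
    Matrix.of (fun a a' => ∑ b, star (ψ a b) * φ a' b) with hMdef
  have htr : Matrix.trace M = 0 := by
    simp only [Matrix.trace, Matrix.diag, hMdef, Matrix.of_apply]
    exact horth
  obtain ⟨v, hv_ip, hvq⟩ := lemC dA M htr
  refine ⟨fun i a => star (v i a), ?_, ?_⟩
  · intro i j
    have step : ip (fun a => star (v i a)) (fun a => star (v j a))
        = star (ip (v i) (v j)) := by
      simp only [ip, star_sum, star_mul', star_star]
    rw [step, hv_ip i j]
    rcases eq_or_ne i j with h | h
    · simp [h]
    · simp [h]
  · intro i
    have key : ip (fun b => ∑ a, v i a * ψ a b) (fun b => ∑ a, v i a * φ a b)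
        = bform M (v i) (v i) := by
      simp only [ip, bform, star_sum, star_mul', hMdef, Matrix.of_apply,
        Finset.sum_mul, Finset.mul_sum]
      conv_rhs => rw [Finset.sum_comm]
      rw [Finset.sum_comm]
      apply Finset.sum_congr rfl
      intro a _
      rw [Finset.sum_comm]
      apply Finset.sum_congr rfl
      intro a' _
      apply Finset.sum_congr rfl
      intro b _
      ring
    simp only [star_star]
    rw [key, hvq i]
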